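/- Let f : ℝ/ℤ → ℝⁿ be a closed curve of class C² with f'(θ) ≠ 0 for all θ, let t(θ) = f'(θ)/‖f'(θ)‖, and let θ₁ ≠ θ₂ be parameters with f(θ₁) ≠ f(θ₂). Define cos φ(θ₁,θ₂) = 2(Δf·t(θ₁))(Δf·t(θ₂))/‖Δf‖² − t(θ₁)·t(θ₂), where Δf = f(θ₁) − f(θ₂). Then the mixed second partial derivative satisfies ∂²/∂θ₁∂θ₂ [ log( ‖f(θ₁) − f(θ₂)‖² / (‖f'(θ₁)‖ ‖f'(θ₂)‖) ) ] = (2 ‖f'(θ₁)‖ ‖f'(θ₂)‖ / ‖f(θ₁) − f(θ₂)‖²) · cos φ(θ₁,θ₂). -/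

import Mathlib

open MeasureTheory Real
open scoped RealInnerProductSpace

noncomputable section

/-- The mixed second partial derivative of
`log(‖f(θ₁) - f(θ₂)‖² / (‖f'(θ₁)‖ ‖f'(θ₂)‖))` equals
`(2‖f'(θ₁)‖‖f'(θ₂)‖/‖Δf‖²)·cos φ(θ₁,θ₂)`, where `cos φ` is the cosine of the
conformal angle formed with the unit tangents `t = f'/‖f'‖`. -/
theorem mixed_partial_log_eq_cos_conformal_angle
    (n : ℕ) (f : ℝ → EuclideanSpace ℝ (Fin n))
    (hper : ∀ θ : ℝ, f (θ + 1) = f θ)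
    (hC2 : ContDiff ℝ 2 f)
    (hreg : ∀ θ : ℝ, deriv f θ ≠ 0)
    (θ₁ θ₂ : ℝ) (hθ : θ₁ ≠ θ₂) (hne : f θ₁ ≠ f θ₂) :
    deriv (fun a : ℝ => deriv (fun b : ℝ =>
        Real.log (‖f a - f b‖ ^ 2 / (‖deriv f a‖ * ‖deriv f b‖))) θ₂) θ₁
      = (2 * ‖deriv f θ₁‖ * ‖deriv f θ₂‖ / ‖f θ₁ - f θ₂‖ ^ 2) *
        (2 * ⟪f θ₁ - f θ₂, ‖deriv f θ₁‖⁻¹ • deriv f θ₁⟫ *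
             ⟪f θ₁ - f θ₂, ‖deriv f θ₂‖⁻¹ • deriv f θ₂⟫ / ‖f θ₁ - f θ₂‖ ^ 2
          - ⟪‖deriv f θ₁‖⁻¹ • deriv f θ₁, ‖deriv f θ₂‖⁻¹ • deriv f θ₂⟫) := by
  have hd : Differentiable ℝ f := hC2.differentiable (by norm_num)
  have hd' : Differentiable ℝ (deriv f) := by
    have h : ContDiff ℝ (1 + 1) f := by norm_num [hC2]
    exact ((contDiff_succ_iff_deriv.mp h).2.2).differentiable (by norm_num)
  set c : ℝ := deriv (fun b => Real.log ‖deriv f b‖) θ₂ with hc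
  -- Step 1: the inner derivative formula, for any `a` with `f a ≠ f θ₂`.
  have key : ∀ a : ℝ, f a ≠ f θ₂ →
      deriv (fun b : ℝ =>
          Real.log (‖f a - f b‖ ^ 2 / (‖deriv f a‖ * ‖deriv f b‖))) θ₂
        = -(2 * ⟪f a - f θ₂, deriv f θ₂⟫) / ‖f a - f θ₂‖ ^ 2 - c := by
    intro a ha
    have hΔ : f a - f θ₂ ≠ 0 := sub_ne_zero.mpr ha
    have hΔn : ‖f a - f θ₂‖ ^ 2 ≠ 0 := pow_ne_zero _ (norm_ne_zero_iff.mpr hΔ)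
    -- eventually the log splits
    have hev : (fun b : ℝ =>
        Real.log (‖f a - f b‖ ^ 2 / (‖deriv f a‖ * ‖deriv f b‖)))
        =ᶠ[nhds θ₂] fun b : ℝ =>
          Real.log (‖f a - f b‖ ^ 2) - (Real.log ‖deriv f a‖ + Real.log ‖deriv f b‖) := by
      have hcont : ContinuousAt (fun b => f b) θ₂ := hd.continuous.continuousAt
      have : ∀ᶠ b in nhds θ₂, f b ≠ f a := hcont.eventually_ne (Ne.symm ha)
      filter_upwards [this] with b hb
      have h1 : ‖f a - f b‖ ^ 2 ≠ 0 := by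
        have : f a - f b ≠ 0 := sub_ne_zero.mpr (Ne.symm hb)
        exact pow_ne_zero _ (norm_ne_zero_iff.mpr this)
      have h2 : ‖deriv f a‖ ≠ 0 := norm_ne_zero_iff.mpr (hreg a)
      have h3 : ‖deriv f b‖ ≠ 0 := norm_ne_zero_iff.mpr (hreg b)
      rw [Real.log_div h1 (mul_ne_zero h2 h3), Real.log_mul h2 h3]
    rw [hev.deriv_eq]
    -- derivative of the first term
    have hg : HasDerivAt (fun b => f a - f b) (-(deriv f θ₂)) θ₂ :=
      ((hd θ₂).hasDerivAt).const_sub (f a)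
    have hsq : HasDerivAt (fun b => ‖f a - f b‖ ^ 2)
        (-(2 * ⟪f a - f θ₂, deriv f θ₂⟫)) θ₂ := by
      have := hg.inner ℝ hg
      simp only [real_inner_self_eq_norm_sq] at this
      refine this.congr_deriv ?_
      rw [inner_neg_right, inner_neg_left, real_inner_comm]
      ring
    have hlog1 : HasDerivAt (fun b => Real.log (‖f a - f b‖ ^ 2))
        (-(2 * ⟪f a - f θ₂, deriv f θ₂⟫) / ‖f a - f θ₂‖ ^ 2) θ₂ := hsq.log hΔn
    have hlog2 : HasDerivAt (fun b => Real.log ‖deriv f a‖ + Real.log ‖deriv f b‖)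
        (0 + c) θ₂ := by
      have hdn : DifferentiableAt ℝ (fun b => Real.log ‖deriv f b‖) θ₂ := by
        have h1 : DifferentiableAt ℝ (fun b => ‖deriv f b‖) θ₂ :=
          (hd' θ₂).norm ℝ (hreg θ₂)
        exact h1.log (norm_ne_zero_iff.mpr (hreg θ₂))
      exact (hasDerivAt_const θ₂ _).add hdn.hasDerivAt
    exact (hlog1.sub hlog2).deriv.trans (by ring)
  -- Step 2: the outer derivative.
  have hev2 : (fun a : ℝ => deriv (fun b : ℝ =>
      Real.log (‖f a - f b‖ ^ 2 / (‖deriv f a‖ * ‖deriv f b‖))) θ₂)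
      =ᶠ[nhds θ₁] fun a : ℝ =>
        -(2 * ⟪f a - f θ₂, deriv f θ₂⟫) / ‖f a - f θ₂‖ ^ 2 - c := by
    have : ∀ᶠ a in nhds θ₁, f a ≠ f θ₂ := hd.continuous.continuousAt.eventually_ne hne
    filter_upwards [this] with a ha using key a ha
  rw [hev2.deriv_eq]
  have hΔ : f θ₁ - f θ₂ ≠ 0 := sub_ne_zero.mpr hne
  have hΔn : ‖f θ₁ - f θ₂‖ ^ 2 ≠ 0 := pow_ne_zero _ (norm_ne_zero_iff.mpr hΔ)
  have hg1 : HasDerivAt (fun a => f a - f θ₂) (deriv f θ₁) θ₁ :=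
    ((hd θ₁).hasDerivAt).sub_const (f θ₂)
  have hN : HasDerivAt (fun a => -(2 * ⟪f a - f θ₂, deriv f θ₂⟫))
      (-(2 * ⟪deriv f θ₁, deriv f θ₂⟫)) θ₁ := by
    have := hg1.inner ℝ (hasDerivAt_const θ₁ (deriv f θ₂))
    simp only [inner_zero_right, zero_add] at this
    exact ((this.const_mul (2:ℝ))).neg
  have hD : HasDerivAt (fun a => ‖f a - f θ₂‖ ^ 2) (2 * ⟪f θ₁ - f θ₂, deriv f θ₁⟫) θ₁ := by
    have := hg1.inner ℝ hg1
    simp only [real_inner_self_eq_norm_sq] at this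
    refine this.congr_deriv ?_
    rw [real_inner_comm]
    ring
  have hdiv := (hN.div hD hΔn).sub_const c
  rw [HasDerivAt.deriv (f := fun a => -(2 * ⟪f a - f θ₂, deriv f θ₂⟫) / ‖f a - f θ₂‖ ^ 2 - c) hdiv]
  have h1 : ‖deriv f θ₁‖ ≠ 0 := norm_ne_zero_iff.mpr (hreg θ₁)
  have h2 : ‖deriv f θ₂‖ ≠ 0 := norm_ne_zero_iff.mpr (hreg θ₂)
  rw [real_inner_smul_right, real_inner_smul_right, real_inner_smul_left,
    real_inner_smul_right]
  field_simp
  ring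
end
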